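/- arXiv:2601.01654 — 2 statements merged into one kernel-verified Lean document; each statement's English description precedes it below -/
import Mathlib

section
/- Let p be an odd prime and k = F_p. Let B be the 4×4 matrix over k[[q]] with B[2,1] = 1, B[3,2] = ∑_{d≥1} q^d, B[4,3] = 1 and zeros elsewhere, and let ∇ = t·(q·d/dq) + B act on (k[[q]])^4 ⊗ k[t] with t a central variable. Then the p-curvature ψ = ∇^p − t^(p-1)∇ equals the matrix with entries ψ[2,1] = −t^(p-1), ψ[3,1] = t^(p-2)·∑_{d≥1} d^(p-2) q^d, ψ[3,2] = −t^(p-1)·∑_{d≥1} q^(pd), ψ[4,1] = −t^(p-3)·∑_{d≥1} 2·d^(p-3) q^d, ψ[4,2] = −t^(p-2)·∑_{d≥1} d^(p-2) q^d, ψ[4,3] = −t^(p-1), and all other entries zero. -/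
open Finset Polynomial

namespace Stmt10

lemma natL1 (n i : ℕ) : ∑ b ∈ range n, (n-1-b).choose i = n.choose (i+1) := by
  induction n with
  | zero => simp
  | succ n ih =>
    rw [Finset.sum_range_succ']
    have h1 : ∀ b ∈ range n, (n+1-1-(b+1)).choose i = (n-1-b).choose i := by
      intro b hb; congr 1; omega
    rw [Finset.sum_congr rfl h1, ih]
    have : n + 1 - 1 - 0 = n := by omega
    rw [this, Nat.choose_succ_succ, Nat.add_comm]

lemma natL2 (n i : ℕ) : ∑ b ∈ range n, (b+1) * (n-1-b).choose i = (n+1).choose (i+2) := by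
  induction n with
  | zero => simp [Nat.choose_eq_zero_of_lt (show 1 < i+2 by omega)]
  | succ n ih =>
    rw [Finset.sum_range_succ']
    have h1 : ∀ b ∈ range n, (b+1+1) * ((n+1-1-(b+1)).choose i)
        = (b+1) * ((n-1-b).choose i) + (n-1-b).choose i := by
      intro b hb; have : n+1-1-(b+1) = n-1-b := by omega
      rw [this]; ring
    rw [Finset.sum_congr rfl h1, Finset.sum_add_distrib, ih, natL1]
    have : n + 1 - 1 - 0 = n := by omega
    rw [this]
    have e2 : (n+2).choose (i+2) = (n+1).choose (i+1) + (n+1).choose (i+2) :=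
      Nat.choose_succ_succ _ _
    have e3 : (n+1).choose (i+1) = n.choose i + n.choose (i+1) := Nat.choose_succ_succ _ _
    have e4 : (n+1+1).choose (i+2) = (n+2).choose (i+2) := by norm_num
    omega

lemma natL3 (n i : ℕ) : ∑ b ∈ range n, (n-b) * (n-1-b).choose i
    = (i+1) * ((n+1).choose (i+2)) := by
  have key : ∑ b ∈ range n, (n-b) * (n-1-b).choose i
      + ∑ b ∈ range n, (b+1) * (n-1-b).choose i
      = (n+1) * ∑ b ∈ range n, (n-1-b).choose i := by
    rw [← Finset.sum_add_distrib, Finset.mul_sum]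
    refine Finset.sum_congr rfl fun b hb => ?_
    have : b < n := Finset.mem_range.mp hb
    have : (n-b) + (b+1) = n+1 := by omega
    rw [← Nat.add_mul, this]
  rw [natL2, natL1] at key
  have e1 : (n+1) * n.choose (i+1) = (n+1).choose (i+2) * (i+2) :=
    Nat.add_one_mul_choose_eq n (i+1)
  have e2 : (n+1).choose (i+2) * (i+2) = (i+1) * (n+1).choose (i+2) + (n+1).choose (i+2) := by
    ring
  omega

lemma natL4 (n i : ℕ) : ∑ b ∈ range n, ((b+1)*(n-b)) * (n-1-b).choose i
    = (i+1) * ((n+2).choose (i+3)) := by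
  induction n with
  | zero => simp [Nat.choose_eq_zero_of_lt (show 2 < i+3 by omega)]
  | succ n ih =>
    have split : ∀ b ∈ range (n+1), ((b+1)*(n+1-b)) * ((n+1-1-b).choose i)
        = (b*(n+1-b)) * ((n-b).choose i) + (n+1-b) * ((n-b).choose i) := by
      intro b hb; have hb' : b < n + 1 := Finset.mem_range.mp hb
      have : n+1-1-b = n-b := by omega
      rw [this]; ring
    rw [Finset.sum_congr rfl split, Finset.sum_add_distrib]
    have first : ∑ b ∈ range (n+1), (b*(n+1-b)) * ((n-b).choose i)
        = ∑ b ∈ range n, ((b+1)*(n-b)) * ((n-1-b).choose i) := by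
      rw [Finset.sum_range_succ']
      simp only [Nat.zero_mul, Nat.sub_zero, zero_mul, add_zero]
      refine Finset.sum_congr rfl fun b hb => ?_
      have hb' : b < n := Finset.mem_range.mp hb
      have h1 : n + 1 - (b+1) = n - b := by omega
      have h2 : n - (b+1) = n - 1 - b := by omega
      rw [h1, h2]
    have second : ∑ b ∈ range (n+1), (n+1-b) * ((n-b).choose i)
        = (i+1) * ((n+2).choose (i+2)) := by
      have := natL3 (n+1) i
      refine Eq.trans (Finset.sum_congr rfl fun b hb => ?_) this
      have hb' : b < n + 1 := Finset.mem_range.mp hb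
      have : n + 1 - 1 - b = n - b := by omega
      rw [this]
    rw [first, second, ih]
    have e2 : (n+3).choose (i+3) = (n+2).choose (i+2) + (n+2).choose (i+3) :=
      Nat.choose_succ_succ _ _
    rw [e2]; ring

lemma tri {M : Type*} [AddCommMonoid M] (n : ℕ) (F : ℕ → ℕ → M) :
    ∑ b ∈ range n, ∑ i ∈ range (n-b), F b i = ∑ i ∈ range n, ∑ b ∈ range (n-i), F b i := by
  rw [Finset.sum_sigma', Finset.sum_sigma']
  refine Finset.sum_nbij' (fun x => ⟨x.2, x.1⟩) (fun x => ⟨x.2, x.1⟩) ?_ ?_ ?_ ?_ ?_ <;>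
    simp only [Finset.mem_sigma, Finset.mem_range] <;> intros <;>
      first | omega | rfl | trivial

lemma tri2 {M : Type*} [AddCommMonoid M] (n : ℕ) (F : ℕ → M) :
    ∑ b ∈ range n, ∑ c ∈ range b, F c = ∑ c ∈ range n, (n-1-c) • F c := by
  induction n with
  | zero => simp
  | succ n ih =>
    rw [Finset.sum_range_succ, ih]
    have : ∑ c ∈ range n, (n-1-c) • F c + ∑ c ∈ range n, F c
        = ∑ c ∈ range n, (n-c) • F c := by
      rw [← Finset.sum_add_distrib]
      refine Finset.sum_congr rfl fun c hc => ?_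
      have : c < n := Finset.mem_range.mp hc
      have h : n - c = (n-1-c) + 1 := by omega
      rw [h, add_nsmul, one_nsmul]
    rw [this, Finset.sum_range_succ (fun c => (n+1-1-c) • F c) n]
    have h2 : ∀ c ∈ range n, (n-c) • F c = (n+1-1-c) • F c := by
      intro c hc; have h5 : n + 1 - 1 - c = n - c := by omega
      rw [h5]
    rw [Finset.sum_congr rfl h2]
    have h3 : (n+1-1-n) • F n = 0 := by
      have h4 : n+1-1-n = 0 := by omega
      rw [h4, zero_smul]
    rw [h3, add_zero]

section Abstract
variable {A : Type*} [CommRing A] (T : A → A) (x : A) (c : ℕ → A)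

lemma Tzero (hT : ∀ a b : A, T (a+b) = T a + T b) : T 0 = 0 := by
  have h := hT 0 0; simp only [add_zero] at h
  exact add_eq_left.mp h.symm

lemma Tsum (hT : ∀ a b : A, T (a+b) = T a + T b) {ι : Type*} (s : Finset ι)
    (g : ι → A) : T (∑ b ∈ s, g b) = ∑ b ∈ s, T (g b) := by
  classical
  induction s using Finset.induction with
  | empty => simpa using Tzero T hT
  | insert _ _ hx ih => rw [Finset.sum_insert hx, Finset.sum_insert hx, hT, ih]

lemma Titer_add (hT : ∀ a b : A, T (a+b) = T a + T b) (n : ℕ) (a b : A) :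
    T^[n] (a + b) = T^[n] a + T^[n] b := by
  induction n with
  | zero => simp
  | succ n ih => rw [Function.iterate_succ_apply', Function.iterate_succ_apply',
      Function.iterate_succ_apply', ih, hT]

lemma Titer_zero (hT : ∀ a b : A, T (a+b) = T a + T b) (n : ℕ) : T^[n] 0 = 0 := by
  induction n with
  | zero => rfl
  | succ n ih => rw [Function.iterate_succ_apply', ih, Tzero T hT]

lemma Titer_sum (hT : ∀ a b : A, T (a+b) = T a + T b) (n : ℕ) {ι : Type*} (s : Finset ι)
    (g : ι → A) : T^[n] (∑ b ∈ s, g b) = ∑ b ∈ s, T^[n] (g b) := by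
  classical
  induction s using Finset.induction with
  | empty => simp [Titer_zero T hT]
  | insert _ _ hx ih => rw [Finset.sum_insert hx, Finset.sum_insert hx, Titer_add T hT, ih]

lemma Titer_nsmul (hT : ∀ a b : A, T (a+b) = T a + T b) (n m : ℕ) (a : A) :
    T^[n] (m • a) = m • T^[n] a := by
  induction m with
  | zero => simpa using Titer_zero T hT n
  | succ m ih => rw [succ_nsmul, succ_nsmul, Titer_add T hT, ih]

lemma Txpow (hx : ∀ w, T (x * w) = x * T w) (i : ℕ) (w : A) :
    T (x^i * w) = x^i * T w := by
  induction i with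
  | zero => simp
  | succ i ih => rw [pow_succ, mul_comm (x^i) x, mul_assoc, hx, ih, mul_assoc]

lemma leib (hT : ∀ a b : A, T (a+b) = T a + T b)
    (hx : ∀ w, T (x * w) = x * T w)
    (hc : ∀ i w, T (c i * w) = c (i+1) * (x * w) + c i * T w)
    (a : ℕ) (u : A) :
    T^[a] (c 0 * u) = ∑ i ∈ range (a+1), a.choose i • (x^i * (c i * T^[a-i] u)) := by
  induction a with
  | zero => simp
  | succ a ih =>
    rw [Function.iterate_succ_apply', ih, Tsum T hT]
    have expand : ∀ i ∈ range (a+1),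
        T (a.choose i • (x^i * (c i * T^[a-i] u)))
        = a.choose i • (x^(i+1) * (c (i+1) * T^[a-i] u))
          + a.choose i • (x^i * (c i * T^[a-i+1] u)) := by
      intro i hi
      have h1 : T (x^i * (c i * T^[a-i] u)) = x^i * T (c i * T^[a-i] u) := Txpow T x hx i _
      have h2 : T (c i * T^[a-i] u) = c (i+1) * (x * T^[a-i] u) + c i * T (T^[a-i] u) :=
        hc i _
      have h3 : T (T^[a-i] u) = T^[a-i+1] u := (Function.iterate_succ_apply' T _ u).symm
      have hsm : ∀ (m : ℕ) (y : A), T (m • y) = m • T y := by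
        intro m y
        induction m with
        | zero => simpa using Tzero T hT
        | succ m ihm => rw [succ_nsmul, succ_nsmul, hT, ihm]
      rw [hsm, h1, h2, h3, mul_add, ← smul_add]
      congr 2
      ring
    rw [Finset.sum_congr rfl expand, Finset.sum_add_distrib]
    -- target: ∑ i ∈ range (a+2), (a+1).choose i • (x^i * (c i * T^[a+1-i] u))
    rw [Finset.sum_range_succ' (fun i => (a+1).choose i • (x^i * (c i * T^[a+1-i] u))) (a+1)]
    have pascal : ∀ i ∈ range (a+1),
        (a+1).choose (i+1) • (x^(i+1) * (c (i+1) * T^[a+1-(i+1)] u))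
        = a.choose i • (x^(i+1) * (c (i+1) * T^[a-i] u))
          + a.choose (i+1) • (x^(i+1) * (c (i+1) * T^[a-i] u)) := by
      intro i hi
      have h4 : a+1-(i+1) = a - i := by omega
      rw [h4, Nat.choose_succ_succ, add_nsmul]
    rw [Finset.sum_congr rfl pascal, Finset.sum_add_distrib]
    have left : ∑ i ∈ range (a+1), a.choose i • (x^i * (c i * T^[a-i+1] u))
        = ∑ i ∈ range (a+1), a.choose (i+1) • (x^(i+1) * (c (i+1) * T^[a-i] u))
          + (a+1).choose 0 • (x^0 * (c 0 * T^[a+1-0] u)) := by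
      rw [Finset.sum_range_succ (fun i => a.choose (i+1) • (x^(i+1) * (c (i+1) * T^[a-i] u))) a,
        Nat.choose_succ_self, zero_smul, add_zero,
        Finset.sum_range_succ' (fun i => a.choose i • (x^i * (c i * T^[a-i+1] u))) a]
      congr 1
      · refine Finset.sum_congr rfl fun i hi => ?_
        have hi' : i < a := Finset.mem_range.mp hi
        have h5 : a - (i+1) + 1 = a - i := by omega
        rw [h5]
      · have h6 : a - 0 + 1 = a + 1 - 0 := by omega
        rw [h6]; simp
    rw [left]
    abel
lemma sumconst (hT : ∀ a b : A, T (a+b) = T a + T b) (n : ℕ) (y : A) :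
    ∑ c ∈ range n, T^[n-1-c] (T^[c] y) = n • T^[n-1] y := by
  have h : ∀ c ∈ range n, T^[n-1-c] (T^[c] y) = T^[n-1] y := by
    intro c hc
    rw [← Function.iterate_add_apply]
    have : n-1-c+c = n-1 := by
      have := Finset.mem_range.mp hc; omega
    rw [this]
  rw [Finset.sum_congr rfl h, Finset.sum_const, Finset.card_range]

lemma Gsum (hT : ∀ a b : A, T (a+b) = T a + T b)
    (hx : ∀ w, T (x * w) = x * T w)
    (hc : ∀ i w, T (c i * w) = c (i+1) * (x * w) + c i * T w)
    (n : ℕ) (w : ℕ → ℕ) (u : A) :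
    ∑ b ∈ range n, w b • T^[n-1-b] (c 0 * T^[b] u)
    = ∑ i ∈ range n, (∑ b ∈ range n, w b * (n-1-b).choose i)
        • (x^i * (c i * T^[n-1-i] u)) := by
  have step1 : ∀ b ∈ range n, w b • T^[n-1-b] (c 0 * T^[b] u)
      = ∑ i ∈ range (n-b), (w b * (n-1-b).choose i) • (x^i * (c i * T^[n-1-i] u)) := by
    intro b hb
    have hb' : b < n := Finset.mem_range.mp hb
    rw [leib T x c hT hx hc (n-1-b) (T^[b] u)]
    have hr : n-1-b+1 = n-b := by omega
    rw [hr, Finset.smul_sum]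
    refine Finset.sum_congr rfl fun i hi => ?_
    have hi' : i < n - b := Finset.mem_range.mp hi
    have he : T^[n-1-b-i] (T^[b] u) = T^[n-1-i] u := by
      rw [← Function.iterate_add_apply]
      have : n-1-b-i+b = n-1-i := by omega
      rw [this]
    rw [he, smul_smul]
  rw [Finset.sum_congr rfl step1, tri]
  refine Finset.sum_congr rfl fun i hi => ?_
  rw [← Finset.sum_smul]
  congr 1
  refine Finset.sum_subset (Finset.range_subset_range.mpr (Nat.sub_le n i)) ?_
  intro b hb hb'
  have h1 : b < n := Finset.mem_range.mp hb
  have h2 : ¬ b < n - i := fun h => hb' (Finset.mem_range.mpr h)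
  have h3 : n-1-b < i := by omega
  rw [Nat.choose_eq_zero_of_lt h3, Nat.mul_zero]

end Abstract

section Gdefs
variable {A : Type*} [CommRing A]

noncomputable def g1 (T : A → A) (v : Fin 4 → A) (n : ℕ) : A :=
  T^[n] (v 1) + ∑ b ∈ range n, T^[n-1-b] (T^[b] (v 0))

noncomputable def g2 (T : A → A) (m : A) (v : Fin 4 → A) (n : ℕ) : A :=
  T^[n] (v 2) + ∑ b ∈ range n, T^[n-1-b] (m * g1 T v b)

noncomputable def g3 (T : A → A) (m : A) (v : Fin 4 → A) (n : ℕ) : A :=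
  T^[n] (v 3) + ∑ b ∈ range n, T^[n-1-b] (g2 T m v b)

lemma gstep_sum (T : A → A) (hT : ∀ a b : A, T (a+b) = T a + T b) (z : ℕ → A) (n : ℕ) :
    T (∑ b ∈ range n, T^[n-1-b] (z b)) + z n = ∑ b ∈ range (n+1), T^[n-b] (z b) := by
  rw [Tsum T hT, Finset.sum_range_succ (fun b => T^[n-b] (z b)) n]
  congr 1
  · refine Finset.sum_congr rfl fun b hb => ?_
    have hb' : b < n := Finset.mem_range.mp hb
    rw [← Function.iterate_succ_apply' T (n-1-b) (z b)]
    have h : (n-1-b).succ = n-b := by omega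
    rw [h]
  · rw [Nat.sub_self]
    exact (Function.iterate_zero_apply T (z n)).symm

lemma g1_succ (T : A → A) (hT : ∀ a b : A, T (a+b) = T a + T b) (v : Fin 4 → A) (n : ℕ) :
    g1 T v (n+1) = T (g1 T v n) + T^[n] (v 0) := by
  unfold g1
  rw [hT, add_assoc]
  congr 1
  · exact Function.iterate_succ_apply' T n (v 1)
  · have h : ∀ b ∈ range (n+1), T^[n+1-1-b] (T^[b] (v 0)) = T^[n-b] (T^[b] (v 0)) := by
      intro b hb
      have : n+1-1-b = n-b := by omega
      rw [this]
    rw [Finset.sum_congr rfl h]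
    exact (gstep_sum T hT (fun b => T^[b] (v 0)) n).symm

lemma g2_succ (T : A → A) (hT : ∀ a b : A, T (a+b) = T a + T b) (m : A) (v : Fin 4 → A)
    (n : ℕ) : g2 T m v (n+1) = T (g2 T m v n) + m * g1 T v n := by
  unfold g2
  rw [hT, add_assoc]
  congr 1
  · exact Function.iterate_succ_apply' T n (v 2)
  · have h : ∀ b ∈ range (n+1), T^[n+1-1-b] (m * g1 T v b) = T^[n-b] (m * g1 T v b) := by
      intro b hb
      have : n+1-1-b = n-b := by omega
      rw [this]
    rw [Finset.sum_congr rfl h]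
    exact (gstep_sum T hT (fun b => m * g1 T v b) n).symm

lemma g3_succ (T : A → A) (hT : ∀ a b : A, T (a+b) = T a + T b) (m : A) (v : Fin 4 → A)
    (n : ℕ) : g3 T m v (n+1) = T (g3 T m v n) + g2 T m v n := by
  unfold g3
  rw [hT, add_assoc]
  congr 1
  · exact Function.iterate_succ_apply' T n (v 3)
  · have h : ∀ b ∈ range (n+1), T^[n+1-1-b] (g2 T m v b) = T^[n-b] (g2 T m v b) := by
      intro b hb
      have : n+1-1-b = n-b := by omega
      rw [this]
    rw [Finset.sum_congr rfl h]
    exact (gstep_sum T hT (fun b => g2 T m v b) n).symm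

lemma iter_formula (T : A → A) (m : A) (nab : (Fin 4 → A) → Fin 4 → A)
    (hT : ∀ a b : A, T (a+b) = T a + T b)
    (hn : ∀ w, nab w 0 = T (w 0) ∧ nab w 1 = T (w 1) + w 0
      ∧ nab w 2 = T (w 2) + m * w 1 ∧ nab w 3 = T (w 3) + w 2)
    (v : Fin 4 → A) (n : ℕ) :
    nab^[n] v 0 = T^[n] (v 0) ∧ nab^[n] v 1 = g1 T v n
      ∧ nab^[n] v 2 = g2 T m v n ∧ nab^[n] v 3 = g3 T m v n := by
  induction n with
  | zero => simp [g1, g2, g3]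
  | succ n ih =>
    obtain ⟨h0, h1, h2, h3⟩ := ih
    obtain ⟨k0, k1, k2, k3⟩ := hn (nab^[n] v)
    have hiter : nab^[n+1] v = nab (nab^[n] v) := Function.iterate_succ_apply' nab n v
    refine ⟨?_, ?_, ?_, ?_⟩
    · rw [hiter, k0, h0]
      exact (Function.iterate_succ_apply' T n (v 0)).symm
    · rw [hiter, k1, h1, h0, g1_succ T hT v n]
    · rw [hiter, k2, h2, h1, g2_succ T hT m v n]
    · rw [hiter, k3, h3, h2, g3_succ T hT m v n]

end Gdefs
section Concrete
variable {p : ℕ}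
variable (D : PowerSeries (ZMod p) → PowerSeries (ZMod p))
variable (hD : ∀ (g : PowerSeries (ZMod p)) (n : ℕ),
    PowerSeries.coeff (R := ZMod p) n (D g) = (n : ZMod p) * PowerSeries.coeff (R := ZMod p) n g)

include hD

lemma Dzero : D 0 = 0 := by
  ext n; rw [hD]; simp

lemma Dadd (a b : PowerSeries (ZMod p)) : D (a + b) = D a + D b := by
  ext n; rw [map_add, hD, hD, hD, map_add, mul_add]

lemma Dmul (a b : PowerSeries (ZMod p)) : D (a * b) = D a * b + a * D b := by
  ext n
  rw [map_add, hD, PowerSeries.coeff_mul, PowerSeries.coeff_mul, PowerSeries.coeff_mul,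
    Finset.mul_sum, ← Finset.sum_add_distrib]
  refine Finset.sum_congr rfl fun x hx => ?_
  have hxn : x.1 + x.2 = n := Finset.HasAntidiagonal.mem_antidiagonal.mp hx
  rw [hD, hD]
  have h : (n : ZMod p) = (x.1 : ZMod p) + (x.2 : ZMod p) := by rw [← hxn]; push_cast; ring
  rw [h]; ring

lemma Diter (a : ℕ) (g : PowerSeries (ZMod p)) (n : ℕ) :
    PowerSeries.coeff (R := ZMod p) n (D^[a] g)
      = (n : ZMod p)^a * PowerSeries.coeff (R := ZMod p) n g := by
  induction a with
  | zero => simp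
  | succ a ih =>
    rw [Function.iterate_succ_apply', hD, ih, pow_succ]; ring

lemma Dcard (hp : p.Prime) (g : PowerSeries (ZMod p)) : D^[p] g = D g := by
  haveI : Fact p.Prime := ⟨hp⟩
  ext n; rw [Diter D hD, hD, ZMod.pow_card]

variable (Dp : Polynomial (PowerSeries (ZMod p)) → Polynomial (PowerSeries (ZMod p)))
variable (hDp : ∀ (g : Polynomial (PowerSeries (ZMod p))) (n : ℕ),
    (Dp g).coeff n = D (g.coeff n))

include hDp

lemma Dpadd (u w : Polynomial (PowerSeries (ZMod p))) : Dp (u + w) = Dp u + Dp w := by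
  refine Polynomial.ext fun n => ?_; rw [hDp, Polynomial.coeff_add, Polynomial.coeff_add, hDp, hDp, Dadd D hD]

lemma DpCmul (c : PowerSeries (ZMod p)) (u : Polynomial (PowerSeries (ZMod p))) :
    Dp (C c * u) = C (D c) * u + C c * Dp u := by
  refine Polynomial.ext fun n => ?_
  rw [hDp, Polynomial.coeff_add, Polynomial.coeff_C_mul, Polynomial.coeff_C_mul,
    Polynomial.coeff_C_mul, hDp, Dmul D hD]

lemma DpXmul (u : Polynomial (PowerSeries (ZMod p))) : Dp (X * u) = X * Dp u := by
  refine Polynomial.ext fun n => ?_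
  cases n with
  | zero =>
    rw [hDp, Polynomial.mul_coeff_zero, Polynomial.mul_coeff_zero, Polynomial.coeff_X_zero,
      zero_mul, zero_mul, Dzero D hD]
  | succ k => rw [hDp, Polynomial.coeff_X_mul, Polynomial.coeff_X_mul, hDp]

lemma DpXpowmul (i : ℕ) (u : Polynomial (PowerSeries (ZMod p))) :
    Dp (X^i * u) = X^i * Dp u := by
  induction i generalizing u with
  | zero => simp
  | succ i ih =>
    rw [pow_succ, mul_assoc, ih (X * u), DpXmul D hD Dp hDp, mul_assoc]

lemma Dpiter (a : ℕ) (u : Polynomial (PowerSeries (ZMod p))) (n : ℕ) :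
    (Dp^[a] u).coeff n = D^[a] (u.coeff n) := by
  induction a with
  | zero => simp
  | succ a ih =>
    rw [Function.iterate_succ_apply', hDp, ih]
    exact (Function.iterate_succ_apply' D a (u.coeff n)).symm

lemma Dpcard (hp : p.Prime) (u : Polynomial (PowerSeries (ZMod p))) : Dp^[p] u = Dp u := by
  refine Polynomial.ext fun n => ?_; rw [Dpiter D hD Dp hDp, Dcard D hD hp, hDp]

lemma Titer_eq (n : ℕ) (u : Polynomial (PowerSeries (ZMod p))) :
    (fun w : Polynomial (PowerSeries (ZMod p)) => X * Dp w)^[n] u = X^n * Dp^[n] u := by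
  induction n with
  | zero => simp
  | succ n ih =>
    rw [Function.iterate_succ_apply', ih]
    show X * Dp (X^n * Dp^[n] u) = _
    rw [DpXpowmul D hD Dp hDp, ← Function.iterate_succ_apply' Dp n u, pow_succ]
    ring

lemma Tp (hp : p.Prime) (u : Polynomial (PowerSeries (ZMod p))) :
    (fun w : Polynomial (PowerSeries (ZMod p)) => X * Dp w)^[p] u
      = X^(p-1) * (X * Dp u) := by
  rw [Titer_eq D hD Dp hDp, Dpcard D hD Dp hDp hp]
  have hps : p - 1 + 1 = p := by have := hp.two_le; omega
  have h : (X : Polynomial (PowerSeries (ZMod p)))^p = X^(p-1) * X := by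
    rw [← pow_succ, hps]
  rw [h, mul_assoc]

end Concrete
end Stmt10

/-- Explicit `p`-curvature of the quantum connection of local `P^1` (odd prime `p`):
with `∇ = t·(q d/dq) + B` acting on `(F_p[[q]][t])^4`, where `B[2,1] = 1`,
`B[3,2] = ∑_{d≥1} q^d`, `B[4,3] = 1` (1-based), the `p`-curvature `ψ = ∇^p − t^{p-1}∇`
is given by the explicit matrix `Ψ` with entries `Ψ[2,1] = −t^{p-1}`,
`Ψ[3,1] = t^{p-2}∑ d^{p-2}q^d`, `Ψ[3,2] = −t^{p-1}∑ q^{pd}`,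
`Ψ[4,1] = −t^{p-3}∑ 2d^{p-3}q^d`, `Ψ[4,2] = −t^{p-2}∑ d^{p-2}q^d`, `Ψ[4,3] = −t^{p-1}`. -/
theorem stmt_10 (p : ℕ) (hp : p.Prime) (hodd : Odd p)
    (D : PowerSeries (ZMod p) → PowerSeries (ZMod p))
    (hD : ∀ (g : PowerSeries (ZMod p)) (n : ℕ),
      PowerSeries.coeff (R := ZMod p) n (D g) = (n : ZMod p) * PowerSeries.coeff (R := ZMod p) n g)
    (Dp : Polynomial (PowerSeries (ZMod p)) → Polynomial (PowerSeries (ZMod p)))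
    (hDp : ∀ (g : Polynomial (PowerSeries (ZMod p))) (n : ℕ),
      (Dp g).coeff n = D (g.coeff n))
    (B : Matrix (Fin 4) (Fin 4) (PowerSeries (ZMod p)))
    (hB : B = Matrix.of
      ![![0,0,0,0],
        ![1,0,0,0],
        ![0, PowerSeries.mk (fun d => if d = 0 then (0 : ZMod p) else 1), 0, 0],
        ![0,0,1,0]])
    (nabla : (Fin 4 → Polynomial (PowerSeries (ZMod p)))
      → Fin 4 → Polynomial (PowerSeries (ZMod p)))
    (hnabla : ∀ v i, nabla v i = Polynomial.X * Dp (v i)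
      + ∑ j, Polynomial.C (B i j) * v j)
    (Ψ : Matrix (Fin 4) (Fin 4) (Polynomial (PowerSeries (ZMod p))))
    (hΨ : Ψ = Matrix.of
      ![![0,0,0,0],
        ![-(Polynomial.X ^ (p-1)), 0, 0, 0],
        ![Polynomial.X ^ (p-2) * Polynomial.C
            (PowerSeries.mk fun d => if d = 0 then (0 : ZMod p) else (d : ZMod p) ^ (p-2)),
          -(Polynomial.X ^ (p-1)) * Polynomial.C
            (PowerSeries.mk fun n => if n ≠ 0 ∧ p ∣ n then (1 : ZMod p) else 0), 0, 0],
        ![-(Polynomial.X ^ (p-3)) * Polynomial.C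
            (PowerSeries.mk fun d => if d = 0 then (0 : ZMod p) else 2 * (d : ZMod p) ^ (p-3)),
          -(Polynomial.X ^ (p-2)) * Polynomial.C
            (PowerSeries.mk fun d => if d = 0 then (0 : ZMod p) else (d : ZMod p) ^ (p-2)),
          -(Polynomial.X ^ (p-1)), 0]]) :
    ∀ (v : Fin 4 → Polynomial (PowerSeries (ZMod p))) (i : Fin 4),
      nabla^[p] v i - Polynomial.X ^ (p-1) * nabla v i = ∑ j, Ψ i j * v j := by
  have hp2 : 2 ≤ p := hp.two_le
  have hp3 : 3 ≤ p := by
    rcases hodd with ⟨k, hk⟩; omega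
  haveI : Fact p.Prime := ⟨hp⟩
  subst hB
  subst hΨ
  intro v i
  set f : PowerSeries (ZMod p) := PowerSeries.mk (fun d => if d = 0 then (0 : ZMod p) else 1)
    with hf
  set T : Polynomial (PowerSeries (ZMod p)) → Polynomial (PowerSeries (ZMod p)) :=
    fun w => Polynomial.X * Dp w with hTdef
  have hT : ∀ a b, T (a+b) = T a + T b := by
    intro a b; simp only [hTdef]; rw [Stmt10.Dpadd D hD Dp hDp, mul_add]
  have hx : ∀ w, T (Polynomial.X * w) = Polynomial.X * T w := by
    intro w; simp only [hTdef]; rw [Stmt10.DpXmul D hD Dp hDp]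
  have hc : ∀ i w, T ((fun i => Polynomial.C (D^[i] f)) i * w)
      = (fun i => Polynomial.C (D^[i] f)) (i+1) * (Polynomial.X * w)
        + (fun i => Polynomial.C (D^[i] f)) i * T w := by
    intro i w
    simp only [hTdef]
    rw [Stmt10.DpCmul D hD Dp hDp, mul_add, Function.iterate_succ_apply' D i f]
    ring
  have hTp : ∀ u, T^[p] u = Polynomial.X^(p-1) * T u := by
    intro u; simp only [hTdef]; exact Stmt10.Tp D hD Dp hDp hp u
  have hchar : ((p : ℕ) : Polynomial (PowerSeries (ZMod p))) = 0 := by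
    have h1 : ((p : ℕ) : ZMod p) = 0 := ZMod.natCast_self p
    calc ((p:ℕ) : Polynomial (PowerSeries (ZMod p)))
        = algebraMap (ZMod p) _ ((p : ℕ) : ZMod p) :=
          (map_natCast (algebraMap (ZMod p) (Polynomial (PowerSeries (ZMod p)))) p).symm
      _ = 0 := by rw [h1, map_zero]
  have hsmul0 : ∀ (mn : ℕ) (y : Polynomial (PowerSeries (ZMod p))), p ∣ mn → mn • y = 0 := by
    intro mn y hdvd
    obtain ⟨k, rfl⟩ := hdvd
    rw [nsmul_eq_mul, Nat.cast_mul, hchar, zero_mul, zero_mul]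
  have hc0 : (fun i => Polynomial.C (D^[i] f)) 0 = Polynomial.C f := rfl
  have hn : ∀ w, nabla w 0 = T (w 0) ∧ nabla w 1 = T (w 1) + w 0
      ∧ nabla w 2 = T (w 2) + Polynomial.C f * w 1 ∧ nabla w 3 = T (w 3) + w 2 := by
    intro w
    refine ⟨?_, ?_, ?_, ?_⟩ <;>
    · rw [hnabla]
      simp [Fin.sum_univ_four, hTdef]
  obtain ⟨H0, H1, H2, H3⟩ :=
    Stmt10.iter_formula T (Polynomial.C f) nabla hT hn v p
  obtain ⟨K0, K1, K2, K3⟩ := hn v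
  have hg1e : ∀ b, Stmt10.g1 T v b = T^[b] (v 1) + b • T^[b-1] (v 0) := by
    intro b
    unfold Stmt10.g1
    rw [Stmt10.sumconst T hT b (v 0)]
  fin_cases i <;>
    simp only [Fin.zero_eta, Fin.mk_one, Fin.isValue, Fin.reduceFinMk]
  · -- component 0
    rw [H0, K0, hTp]
    simp [Fin.sum_univ_four]
  · -- component 1
    rw [H1, K1]
    have e1 : Stmt10.g1 T v p = Polynomial.X^(p-1) * T (v 1) := by
      rw [hg1e p, hTp, hsmul0 p (T^[p-1] (v 0)) dvd_rfl, add_zero]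
    rw [e1]
    simp only [Fin.sum_univ_four]
    simp [Fin.isValue]
    ring
  · -- component 2
    rw [H2, K2]
    have hsplit : ∀ b ∈ Finset.range p,
        T^[p-1-b] (Polynomial.C f * Stmt10.g1 T v b)
        = T^[p-1-b] (Polynomial.C f * T^[b] (v 1))
          + b • T^[p-1-b] (Polynomial.C f * T^[b-1] (v 0)) := by
      intro b _
      rw [hg1e b, mul_add, mul_smul_comm, Stmt10.Titer_add T hT, Stmt10.Titer_nsmul T hT]
    have hA := Stmt10.Gsum T Polynomial.X (fun i => Polynomial.C (D^[i] f)) hT hx hc p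
        (fun _ => 1) (v 1)
    simp only [one_smul, one_mul, Function.iterate_zero_apply] at hA
    have hA2 : ∑ i ∈ Finset.range p,
        (∑ b ∈ Finset.range p, (p-1-b).choose i)
          • (Polynomial.X^i * (Polynomial.C (D^[i] f) * T^[p-1-i] (v 1)))
        = Polynomial.X^(p-1) * (Polynomial.C (D^[p-1] f) * v 1) := by
      rw [Finset.sum_eq_single_of_mem (p-1) (Finset.mem_range.mpr (by omega))]
      · rw [Stmt10.natL1 p (p-1)]
        have e1 : p-1+1 = p := by omega
        have e2 : p-1-(p-1) = 0 := by omega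
        rw [e1, Nat.choose_self, one_smul, e2, Function.iterate_zero_apply]
      · intro i hi hne
        rw [Stmt10.natL1 p i]
        exact hsmul0 _ _ (hp.dvd_choose_self (by omega)
          (by have := Finset.mem_range.mp hi; omega))
    have hB1 : ∑ b ∈ Finset.range p, b • T^[p-1-b] (Polynomial.C f * T^[b-1] (v 0))
        = ∑ b ∈ Finset.range (p-1),
            (b+1) • T^[p-1-1-b] (Polynomial.C f * T^[b] (v 0)) := by
      have hr : Finset.range p = Finset.range ((p-1)+1) := by congr 1; omega
      rw [hr, Finset.sum_range_succ'
        (fun b => b • T^[p-1-b] (Polynomial.C f * T^[b-1] (v 0))) (p-1)]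
      simp only [zero_smul, add_zero]
      refine Finset.sum_congr rfl fun b hb => ?_
      have e1 : p-1-(b+1) = p-1-1-b := by omega
      have e2 : b+1-1 = b := by omega
      rw [e1, e2]
    have hB2 := Stmt10.Gsum T Polynomial.X (fun i => Polynomial.C (D^[i] f)) hT hx hc (p-1)
        (fun b => b+1) (v 0)
    simp only [Function.iterate_zero_apply] at hB2
    have hB3 : ∑ i ∈ Finset.range (p-1),
        (∑ b ∈ Finset.range (p-1), (b+1) * (p-1-1-b).choose i)
          • (Polynomial.X^i * (Polynomial.C (D^[i] f) * T^[p-1-1-i] (v 0)))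
        = Polynomial.X^(p-2) * (Polynomial.C (D^[p-2] f) * v 0) := by
      rw [Finset.sum_eq_single_of_mem (p-2) (Finset.mem_range.mpr (by omega))]
      · rw [Stmt10.natL2 (p-1) (p-2)]
        have e1 : p-1+1 = p := by omega
        have e2 : p-2+2 = p := by omega
        have e3 : p-1-1-(p-2) = 0 := by omega
        rw [e1, e2, Nat.choose_self, one_smul, e3, Function.iterate_zero_apply]
      · intro i hi hne
        rw [Stmt10.natL2 (p-1) i]
        have e1 : p-1+1 = p := by omega
        rw [e1]
        exact hsmul0 _ _ (hp.dvd_choose_self (by omega)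
          (by have := Finset.mem_range.mp hi; omega))
    have hg2 : Stmt10.g2 T (Polynomial.C f) v p
        = Polynomial.X^(p-1) * T (v 2)
          + (Polynomial.X^(p-1) * (Polynomial.C (D^[p-1] f) * v 1)
            + Polynomial.X^(p-2) * (Polynomial.C (D^[p-2] f) * v 0)) := by
      unfold Stmt10.g2
      rw [hTp, Finset.sum_congr rfl hsplit, Finset.sum_add_distrib, hA, hA2, hB1, hB2, hB3]
    rw [hg2]
    have hs1 : (PowerSeries.mk fun d => if d = 0 then (0:ZMod p) else (d:ZMod p)^(p-2))
        = D^[p-2] f := by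
      ext d
      rw [Stmt10.Diter D hD]
      simp only [hf, PowerSeries.coeff_mk]
      by_cases hd : d = 0
      · simp [hd]
      · simp [hd]
    have hs2C : Polynomial.C (PowerSeries.mk fun n => if n ≠ 0 ∧ p ∣ n then (1:ZMod p) else 0)
        = Polynomial.C f - Polynomial.C (D^[p-1] f) := by
      rw [← map_sub]
      congr 1
      ext d
      rw [map_sub, Stmt10.Diter D hD]
      simp only [hf, PowerSeries.coeff_mk]
      by_cases hd : d = 0
      · simp [hd]
      · by_cases hdp : p ∣ d
        · have hd0 : (d : ZMod p) = 0 := (ZMod.natCast_eq_zero_iff d p).mpr hdp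
          simp [hd, hdp, hd0, zero_pow (show p-1 ≠ 0 by omega)]
        · have hd0 : (d : ZMod p) ≠ 0 :=
            fun h => hdp ((ZMod.natCast_eq_zero_iff d p).mp h)
          rw [ZMod.pow_card_sub_one_eq_one hd0]
          simp [hd, hdp]
    simp only [Fin.sum_univ_four]
    simp only [Matrix.of_apply, Matrix.cons_val', Matrix.cons_val_zero, Matrix.cons_val_one,
      Matrix.head_cons, Matrix.empty_val', Matrix.cons_val_fin_one, Matrix.head_fin_const,
      Matrix.cons_val_two, Matrix.tail_cons, Matrix.cons_val_three]
    rw [hs1, hs2C]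
    ring
  · -- component 3
    rw [H3, K3]
    have hsplit3 : ∀ b ∈ Finset.range p,
        T^[p-1-b] (Stmt10.g2 T (Polynomial.C f) v b)
        = T^[p-1-b] (T^[b] (v 2))
          + ∑ cc ∈ Finset.range b, T^[p-2-cc] (Polynomial.C f * Stmt10.g1 T v cc) := by
      intro b hb
      have hb' : b < p := Finset.mem_range.mp hb
      unfold Stmt10.g2
      rw [Stmt10.Titer_add T hT, Stmt10.Titer_sum T hT]
      congr 1
      refine Finset.sum_congr rfl fun cc hcc => ?_
      rw [← Function.iterate_add_apply]
      have e : p-1-b + (b-1-cc) = p-2-cc := by have := Finset.mem_range.mp hcc; omega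
      rw [e]
    have hsum3 : ∑ b ∈ Finset.range p, T^[p-1-b] (Stmt10.g2 T (Polynomial.C f) v b)
        = p • T^[p-1] (v 2)
          + ∑ cc ∈ Finset.range p, (p-1-cc)
              • T^[p-2-cc] (Polynomial.C f * Stmt10.g1 T v cc) := by
      rw [Finset.sum_congr rfl hsplit3, Finset.sum_add_distrib, Stmt10.sumconst T hT,
        Stmt10.tri2]
    have hsplit4 : ∀ cc ∈ Finset.range p,
        (p-1-cc) • T^[p-2-cc] (Polynomial.C f * Stmt10.g1 T v cc)
        = (p-1-cc) • T^[p-2-cc] (Polynomial.C f * T^[cc] (v 1))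
          + ((p-1-cc)*cc) • T^[p-2-cc] (Polynomial.C f * T^[cc-1] (v 0)) := by
      intro cc _
      rw [hg1e cc, mul_add, mul_smul_comm, Stmt10.Titer_add T hT, Stmt10.Titer_nsmul T hT,
        smul_add, smul_smul]
    have hC1 : ∑ cc ∈ Finset.range p, (p-1-cc) • T^[p-2-cc] (Polynomial.C f * T^[cc] (v 1))
        = ∑ cc ∈ Finset.range (p-1),
            (p-1-cc) • T^[p-1-1-cc] (Polynomial.C f * T^[cc] (v 1)) := by
      have hr : Finset.range p = Finset.range ((p-1)+1) := by congr 1; omega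
      rw [hr, Finset.sum_range_succ]
      have hz : (p-1-(p-1)) • T^[p-2-(p-1)] (Polynomial.C f * T^[p-1] (v 1)) = 0 := by
        have e : p-1-(p-1) = 0 := by omega
        rw [e, zero_smul]
      rw [hz, add_zero]
      refine Finset.sum_congr rfl fun cc hcc => ?_
      have e : p-2-cc = p-1-1-cc := by omega
      rw [e]
    have hC2 := Stmt10.Gsum T Polynomial.X (fun i => Polynomial.C (D^[i] f)) hT hx hc (p-1)
        (fun cc => p-1-cc) (v 1)
    simp only [Function.iterate_zero_apply] at hC2
    have hC3 : ∑ i ∈ Finset.range (p-1),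
        (∑ b ∈ Finset.range (p-1), (p-1-b) * (p-1-1-b).choose i)
          • (Polynomial.X^i * (Polynomial.C (D^[i] f) * T^[p-1-1-i] (v 1)))
        = (p-1) • (Polynomial.X^(p-2) * (Polynomial.C (D^[p-2] f) * v 1)) := by
      rw [Finset.sum_eq_single_of_mem (p-2) (Finset.mem_range.mpr (by omega))]
      · rw [Stmt10.natL3 (p-1) (p-2)]
        have e1 : p-2+1 = p-1 := by omega
        have e2 : p-1+1 = p := by omega
        have e3 : p-2+2 = p := by omega
        have e4 : p-1-1-(p-2) = 0 := by omega
        rw [e1, e2, e3, Nat.choose_self, Nat.mul_one, e4, Function.iterate_zero_apply]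
      · intro i hi hne
        rw [Stmt10.natL3 (p-1) i]
        have e2 : p-1+1 = p := by omega
        rw [e2]
        refine hsmul0 _ _ (Dvd.dvd.mul_left (hp.dvd_choose_self (by omega)
          (by have := Finset.mem_range.mp hi; omega)) (i+1))
    have hD1 : ∑ cc ∈ Finset.range p,
          ((p-1-cc)*cc) • T^[p-2-cc] (Polynomial.C f * T^[cc-1] (v 0))
        = ∑ cc ∈ Finset.range (p-2),
            ((cc+1)*(p-2-cc)) • T^[p-2-1-cc] (Polynomial.C f * T^[cc] (v 0)) := by
      have hr : Finset.range p = Finset.range ((p-1)+1) := by congr 1; omega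
      rw [hr, Finset.sum_range_succ'
        (fun cc => ((p-1-cc)*cc) • T^[p-2-cc] (Polynomial.C f * T^[cc-1] (v 0))) (p-1)]
      simp only [Nat.mul_zero, zero_smul, add_zero]
      have hr2 : Finset.range (p-1) = Finset.range ((p-2)+1) := by congr 1; omega
      rw [hr2, Finset.sum_range_succ]
      have hz : ((p-1-(p-2+1))*(p-2+1)) • T^[p-2-(p-2+1)]
          (Polynomial.C f * T^[p-2+1-1] (v 0)) = 0 := by
        have e : p-1-(p-2+1) = 0 := by omega
        rw [e, Nat.zero_mul, zero_smul]
      rw [hz, add_zero]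
      refine Finset.sum_congr rfl fun cc hcc => ?_
      have e1 : p-1-(cc+1) = p-2-cc := by omega
      have e2 : p-2-(cc+1) = p-2-1-cc := by omega
      have e3 : cc+1-1 = cc := by omega
      rw [e1, e2, e3, Nat.mul_comm]
    have hD2 := Stmt10.Gsum T Polynomial.X (fun i => Polynomial.C (D^[i] f)) hT hx hc (p-2)
        (fun cc => (cc+1)*(p-2-cc)) (v 0)
    simp only [Function.iterate_zero_apply] at hD2
    have hD3 : ∑ i ∈ Finset.range (p-2),
        (∑ b ∈ Finset.range (p-2), ((b+1)*(p-2-b)) * (p-2-1-b).choose i)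
          • (Polynomial.X^i * (Polynomial.C (D^[i] f) * T^[p-2-1-i] (v 0)))
        = (p-2) • (Polynomial.X^(p-3) * (Polynomial.C (D^[p-3] f) * v 0)) := by
      rw [Finset.sum_eq_single_of_mem (p-3) (Finset.mem_range.mpr (by omega))]
      · rw [Stmt10.natL4 (p-2) (p-3)]
        have e1 : p-3+1 = p-2 := by omega
        have e2 : p-2+2 = p := by omega
        have e3 : p-3+3 = p := by omega
        have e4 : p-2-1-(p-3) = 0 := by omega
        rw [e1, e2, e3, Nat.choose_self, Nat.mul_one, e4, Function.iterate_zero_apply]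
      · intro i hi hne
        rw [Stmt10.natL4 (p-2) i]
        have e2 : p-2+2 = p := by omega
        rw [e2]
        refine hsmul0 _ _ (Dvd.dvd.mul_left (hp.dvd_choose_self (by omega)
          (by have := Finset.mem_range.mp hi; omega)) (i+1))
    have hg3 : Stmt10.g3 T (Polynomial.C f) v p
        = Polynomial.X^(p-1) * T (v 3)
          + ((p-1) • (Polynomial.X^(p-2) * (Polynomial.C (D^[p-2] f) * v 1))
            + (p-2) • (Polynomial.X^(p-3) * (Polynomial.C (D^[p-3] f) * v 0))) := by
      unfold Stmt10.g3
      rw [hTp, hsum3, hsmul0 p (T^[p-1] (v 2)) dvd_rfl, zero_add,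
        Finset.sum_congr rfl hsplit4, Finset.sum_add_distrib, hC1, hC2, hC3, hD1, hD2, hD3]
    rw [hg3]
    have hneg1 : ((p-1 : ℕ) : Polynomial (PowerSeries (ZMod p))) = -1 := by
      rw [Nat.cast_sub (show 1 ≤ p by omega), hchar, Nat.cast_one, zero_sub]
    have hneg2 : ((p-2 : ℕ) : Polynomial (PowerSeries (ZMod p))) = -2 := by
      rw [Nat.cast_sub (show 2 ≤ p by omega), hchar, zero_sub]
      norm_num
    have hs1 : (PowerSeries.mk fun d => if d = 0 then (0:ZMod p) else (d:ZMod p)^(p-2))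
        = D^[p-2] f := by
      ext d
      rw [Stmt10.Diter D hD]
      simp only [hf, PowerSeries.coeff_mk]
      by_cases hd : d = 0
      · simp [hd]
      · simp [hd]
    have hs3 : (PowerSeries.mk fun d => if d = 0 then (0:ZMod p) else 2*(d:ZMod p)^(p-3))
        = D^[p-3] f + D^[p-3] f := by
      ext d
      rw [map_add, Stmt10.Diter D hD]
      simp only [hf, PowerSeries.coeff_mk]
      by_cases hd : d = 0
      · simp [hd]
      · simp [hd]; ring
    simp only [Fin.sum_univ_four]
    simp only [Matrix.of_apply, Matrix.cons_val', Matrix.cons_val_zero, Matrix.cons_val_one,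
      Matrix.head_cons, Matrix.empty_val', Matrix.cons_val_fin_one, Matrix.head_fin_const,
      Matrix.cons_val_two, Matrix.tail_cons, Matrix.cons_val_three]
    rw [hs1, hs3, map_add, nsmul_eq_mul, nsmul_eq_mul, hneg1, hneg2]
    ring
end

section
/- Let k be a field of characteristic p ≥ 5, A = k[[q]], ∂ = q d/dq, f = ∑_{d≥1} q^d ∈ A. Define C_1, C_2, C_3 as 4×4 matrices over A by: C_1 with entries C_1[2,1] = −1, C_1[3,2] = −∑_{d≥1} q^{pd}, C_1[4,3] = −1, zeros elsewhere; C_2 with entries C_2[3,1] = ∑_{d≥1} d^(p-2) q^d, C_2[4,2] = −∑_{d≥1} d^(p-2) q^d, zeros elsewhere; C_3 with entry C_3[4,1] = −2·∑_{d≥1} d^(p-3) q^d, zeros elsewhere. Let B be the matrix with B[2,1] = B[4,3] = 1, B[3,2] = f, zeros elsewhere. Then ∂C_2 = [C_1, B], ∂C_3 = [C_2, B], and [C_3, B] = 0. -/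
set_option maxHeartbeats 2000000 in
/-- Covariant constancy equations for the explicit local `P^1` `p`-curvature
coefficients (`k` of characteristic `p ≥ 5`, `∂ = q d/dq` acting entrywise):
`∂C₂ = [C₁, B]`, `∂C₃ = [C₂, B]`, and `[C₃, B] = 0`, for the explicit 4×4 matrices
`C₁, C₂, C₃, B` over `k[[q]]` given in the local `P^1` computation. -/
theorem stmt_18 (p : ℕ) (hp : p.Prime) (hp5 : 5 ≤ p) (k : Type*) [Field k] [CharP k p]
    (D : PowerSeries k → PowerSeries k)
    (hD : ∀ (g : PowerSeries k) (n : ℕ),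
      PowerSeries.coeff n (D g) = (n : k) * PowerSeries.coeff n g)
    (f S2 S3 Sp : PowerSeries k)
    (hf : f = PowerSeries.mk fun d => if d = 0 then (0 : k) else 1)
    (hS2 : S2 = PowerSeries.mk fun d => if d = 0 then (0 : k) else (d : k) ^ (p - 2))
    (hS3 : S3 = PowerSeries.mk fun d => if d = 0 then (0 : k) else (d : k) ^ (p - 3))
    (hSp : Sp = PowerSeries.mk fun n => if n ≠ 0 ∧ p ∣ n then (1 : k) else 0)
    (B C1 C2 C3 : Matrix (Fin 4) (Fin 4) (PowerSeries k))
    (hB : B = Matrix.of ![![0,0,0,0], ![1,0,0,0], ![0,f,0,0], ![0,0,1,0]])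
    (hC1 : C1 = Matrix.of ![![0,0,0,0], ![-1,0,0,0], ![0,-Sp,0,0], ![0,0,-1,0]])
    (hC2 : C2 = Matrix.of ![![0,0,0,0], ![0,0,0,0], ![S2,0,0,0], ![0,-S2,0,0]])
    (hC3 : C3 = Matrix.of ![![0,0,0,0], ![0,0,0,0], ![0,0,0,0], ![-(2*S3),0,0,0]]) :
    (∀ i j, D (C2 i j) = (C1 * B - B * C1) i j)
    ∧ (∀ i j, D (C3 i j) = (C2 * B - B * C2) i j)
    ∧ C3 * B - B * C3 = 0 := by
  haveI : Fact p.Prime := ⟨hp⟩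
  have hfermat : ∀ n : ℕ, ¬ p ∣ n → (n : k)^(p-1) = 1 := by
    intro n hn
    let φ : ZMod p →+* k := ZMod.castHom (dvd_refl p) k
    have h2 : (n : ZMod p) ≠ 0 := by rwa [Ne, ZMod.natCast_eq_zero_iff]
    have : φ ((n : ZMod p)^(p-1)) = 1 := by rw [ZMod.pow_card_sub_one_eq_one h2, map_one]
    simpa using this
  have hD0 : D 0 = 0 := by
    ext n; rw [hD]; simp
  have hDS2 : D S2 = f - Sp := by
    ext n
    rw [hD, hS2, hf, hSp]
    simp only [map_sub, PowerSeries.coeff_mk]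
    by_cases hn : n = 0
    · simp [hn]
    by_cases hpn : p ∣ n
    · have hz : (n : k) = 0 := (CharP.cast_eq_zero_iff k p n).2 hpn
      simp [hn, hpn, hz]
    · have : (n : k) * (n : k)^(p-2) = (n : k)^(p-1) := by
        rw [← pow_succ']
        congr 1
        omega
      simp [hn, hpn, this, hfermat n hpn]
  have hDS3 : D S3 = S2 := by
    ext n
    rw [hD, hS3, hS2]
    simp only [PowerSeries.coeff_mk]
    by_cases hn : n = 0
    · simp [hn]
    · have : (n : k) * (n : k)^(p-3) = (n : k)^(p-2) := by
        rw [← pow_succ']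
        congr 1
        omega
      simp [hn, this]
  have hDneg : ∀ g, D (-g) = -(D g) := by
    intro g; ext n; rw [hD, map_neg, map_neg, hD]; ring
  have hD2 : D (-(2*S3)) = -(2*S2) := by
    ext n
    rw [hD, map_neg, map_neg]
    have hc := congrArg (PowerSeries.coeff n) hDS3
    rw [hD] at hc
    rw [two_mul, two_mul, map_add, map_add, ← hc]
    ring
  subst hB hC1 hC2 hC3
  refine ⟨?_, ?_, ?_⟩
  · intro i j
    fin_cases i <;> fin_cases j <;>
      simp [Matrix.mul_apply, Fin.sum_univ_four, Matrix.vecHead, Matrix.vecTail,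
        hD0, hDS2, hDneg] <;>
      ring
  · intro i j
    fin_cases i <;> fin_cases j <;>
      simp [Matrix.mul_apply, Fin.sum_univ_four, Matrix.vecHead, Matrix.vecTail,
        hD0, hD2, hDneg] <;>
      ring
  · ext i j n
    fin_cases i <;> fin_cases j <;>
      simp [Matrix.mul_apply, Fin.sum_univ_four, Matrix.vecHead, Matrix.vecTail]
end
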